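/- (Monitoring inequality of the paper.) For every density matrix ρ on (Fin dA × Fin dB) and every ε ∈ [0,1], setting M_A^ε(ρ) = (1−ε) • ρ + ε • Φ_A(ρ): one has Φ_A(M_A^ε(ρ)) = Φ_A(ρ) and S(Φ_A(ρ)) − S(M_A^ε(ρ)) ≤ (1−ε) · (S(Φ_A(ρ)) − S(ρ)); equivalently, ℜ_A(M_A^ε(ρ)) − ℜ_A(ρ) ≥ ε · 𝕴_A(ρ), where 𝕴_A(ρ) = S(Φ_A(ρ)) − S(ρ) and ℜ_A(ρ) = Real.log dA − 𝕴_A(ρ). -/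

import Mathlib

open Matrix Kronecker BigOperators
open scoped ComplexOrder

/-- The unrevealed-measurement (pinching) map on the bipartite system:
`Φ_A(ρ) = ∑ i, (A i ⊗ₖ 1) * ρ * (A i ⊗ₖ 1)`. -/
noncomputable def pinch {dA dB : ℕ} {ι : Type*} [Fintype ι]
    (A : ι → Matrix (Fin dA) (Fin dA) ℂ)
    (ρ : Matrix (Fin dA × Fin dB) (Fin dA × Fin dB) ℂ) :
    Matrix (Fin dA × Fin dB) (Fin dA × Fin dB) ℂ :=
  ∑ i, ((A i) ⊗ₖ (1 : Matrix (Fin dB) (Fin dB) ℂ)) * ρ *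
    ((A i) ⊗ₖ (1 : Matrix (Fin dB) (Fin dB) ℂ))

/-- The von Neumann entropy of a Hermitian matrix, via its eigenvalues. -/
noncomputable def vnEntropy {n : Type*} [Fintype n] [DecidableEq n]
    {ρ : Matrix n n ℂ} (hρ : ρ.IsHermitian) : ℝ :=
  ∑ k, Real.negMulLog (hρ.eigenvalues k)

/- ### Auxiliary lemmas -/

lemma aux_kron_one_conjTranspose {dA dB : ℕ} (B : Matrix (Fin dA) (Fin dA) ℂ) :
    (B ⊗ₖ (1 : Matrix (Fin dB) (Fin dB) ℂ))ᴴ = Bᴴ ⊗ₖ (1 : Matrix (Fin dB) (Fin dB) ℂ) := by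
  ext ⟨a, b⟩ ⟨c, d⟩
  by_cases h : b = d
  · subst h; simp [conjTranspose_apply, kroneckerMap_apply, one_apply]
  · simp [conjTranspose_apply, kroneckerMap_apply, one_apply, h, Ne.symm h]

/-- The pinching map is linear on real-scalar combinations. -/
lemma aux_pinch_smul_add {dA dB : ℕ} {ι : Type*} [Fintype ι]
    (A : ι → Matrix (Fin dA) (Fin dA) ℂ) (a b : ℝ)
    (ρ σ : Matrix (Fin dA × Fin dB) (Fin dA × Fin dB) ℂ) :
    pinch A (a • ρ + b • σ) = a • pinch A ρ + b • pinch A σ := by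
  simp only [pinch, mul_add, add_mul, mul_smul_comm, smul_mul_assoc, Finset.sum_add_distrib,
    Finset.smul_sum]

/-- The pinching map is idempotent. -/
lemma aux_pinch_idem {dA dB : ℕ} {ι : Type*} [Fintype ι] [DecidableEq ι]
    (A : ι → Matrix (Fin dA) (Fin dA) ℂ)
    (hproj : ∀ i j, A i * A j = if i = j then A i else 0)
    (ρ : Matrix (Fin dA × Fin dB) (Fin dA × Fin dB) ℂ) :
    pinch A (pinch A ρ) = pinch A ρ := by
  classical
  unfold pinch
  refine Finset.sum_congr rfl fun i _ => ?_
  rw [Finset.mul_sum, Finset.sum_mul]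
  rw [Finset.sum_eq_single i]
  · rw [← mul_assoc, ← mul_assoc, ← mul_kronecker_mul, hproj i i, if_pos rfl, one_mul,
      mul_assoc, mul_assoc, ← mul_kronecker_mul, hproj i i, if_pos rfl, one_mul,
      ← mul_assoc]
  · intro j _ hji
    rw [← mul_assoc, ← mul_assoc, ← mul_kronecker_mul, hproj i j, if_neg (Ne.symm hji),
      zero_kronecker, zero_mul, zero_mul, zero_mul]
  · intro h
    exact absurd (Finset.mem_univ i) h

/-- `pinch A ρ` is positive semidefinite when `ρ` is. -/
lemma aux_pinch_posSemidef {dA dB : ℕ} {ι : Type*} [Fintype ι]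
    (A : ι → Matrix (Fin dA) (Fin dA) ℂ)
    (hherm : ∀ i, (A i)ᴴ = A i)
    {ρ : Matrix (Fin dA × Fin dB) (Fin dA × Fin dB) ℂ} (hρ : ρ.PosSemidef) :
    (pinch A ρ).PosSemidef := by
  unfold pinch
  refine Finset.sum_induction _ Matrix.PosSemidef (fun a b ha hb => ha.add hb)
    Matrix.PosSemidef.zero fun i _ => ?_
  have h := hρ.mul_mul_conjTranspose_same ((A i) ⊗ₖ (1 : Matrix (Fin dB) (Fin dB) ℂ))
  rwa [aux_kron_one_conjTranspose, hherm i] at h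

/-- Diagonal entries (real parts) of a PSD matrix are nonnegative. -/
lemma aux_psd_diag_re_nonneg {n : Type*} [Fintype n] [DecidableEq n]
    {X : Matrix n n ℂ} (hX : X.PosSemidef) (k : n) : 0 ≤ (X k k).re := by
  have h1 := hX.diag_nonneg (i := k)
  have h : (0 : ℂ) ≤ X k k := by
    simpa [dotProduct, mulVec, Pi.single_apply, apply_ite (star : ℂ → ℂ),
      Finset.sum_ite_eq, Finset.sum_ite_eq'] using h1
  exact (Complex.le_def.mp h).1

/-- The entropy of a PSD matrix is at most the "diagonal entropy" in any unitary basis. -/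
lemma aux_entropy_le_diag {n : Type*} [Fintype n] [DecidableEq n]
    {σ : Matrix n n ℂ} (hσ : σ.PosSemidef) (U : Matrix n n ℂ)
    (hU : U ∈ Matrix.unitaryGroup n ℂ) :
    vnEntropy hσ.1 ≤ ∑ k, Real.negMulLog ((star U * σ * U) k k).re := by
  classical
  set W : Matrix n n ℂ := (hσ.1.eigenvectorUnitary : Matrix n n ℂ) with hW
  set V : Matrix n n ℂ := star U * W with hVdef
  have hWU : W ∈ Matrix.unitaryGroup n ℂ := hσ.1.eigenvectorUnitary.2
  have hV1 : V * star V = 1 := by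
    rw [hVdef, Matrix.star_mul, star_star, mul_assoc, ← mul_assoc W,
      (Matrix.mem_unitaryGroup_iff.mp hWU), one_mul,
      (Matrix.mem_unitaryGroup_iff'.mp hU)]
  have hV2 : star V * V = 1 := by
    rw [hVdef, Matrix.star_mul, star_star, mul_assoc, ← mul_assoc U,
      (Matrix.mem_unitaryGroup_iff.mp hU), one_mul,
      (Matrix.mem_unitaryGroup_iff'.mp hWU)]
  set lam : n → ℝ := hσ.1.eigenvalues with hlam
  have hspec : star U * σ * U = V * diagonal (Complex.ofReal ∘ lam) * star V := by
    conv_lhs => rw [hσ.1.spectral_theorem, Unitary.conjStarAlgAut_apply]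
    rw [hVdef, Matrix.star_mul, star_star]
    simp only [← hW, Matrix.mul_assoc]
    rfl
  set w : n → n → ℝ := fun k j => Complex.normSq (V k j) with hw
  have hdiagentry : ∀ k, ((star U * σ * U) k k).re = ∑ j, w k j * lam j := by
    intro k
    rw [hspec, Matrix.mul_apply]
    simp only [Matrix.mul_diagonal, Function.comp_apply, Matrix.star_apply, Complex.star_def]
    rw [Complex.re_sum]
    refine Finset.sum_congr rfl fun j _ => ?_
    have : V k j * (lam j : ℂ) * (starRingEnd ℂ) (V k j) = ((w k j * lam j : ℝ) : ℂ) := by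
      rw [mul_comm (V k j), mul_assoc, Complex.mul_conj]
      push_cast
      ring
    rw [this, Complex.ofReal_re]
  have hwnonneg : ∀ k j, 0 ≤ w k j := fun k j => Complex.normSq_nonneg _
  have hrow : ∀ k, ∑ j, w k j = 1 := by
    intro k
    have h := congrArg (fun M : Matrix n n ℂ => (M k k).re) hV1
    simp only [Matrix.mul_apply, Matrix.star_apply, Complex.star_def, Matrix.one_apply_eq,
      Complex.one_re, Complex.re_sum] at h
    rw [← h]
    refine Finset.sum_congr rfl fun j _ => ?_
    rw [Complex.mul_conj, Complex.ofReal_re]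
  have hcol : ∀ j, ∑ k, w k j = 1 := by
    intro j
    have h := congrArg (fun M : Matrix n n ℂ => (M j j).re) hV2
    simp only [Matrix.mul_apply, Matrix.star_apply, Complex.star_def, Matrix.one_apply_eq,
      Complex.one_re, Complex.re_sum] at h
    rw [← h]
    refine Finset.sum_congr rfl fun k _ => ?_
    rw [mul_comm, Complex.mul_conj, Complex.ofReal_re]
  have hlamnn : ∀ j, 0 ≤ lam j := fun j => hσ.eigenvalues_nonneg j
  calc vnEntropy hσ.1 = ∑ j, Real.negMulLog (lam j) := rfl
    _ = ∑ j, (∑ k, w k j) * Real.negMulLog (lam j) := by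
        refine Finset.sum_congr rfl fun j _ => ?_; rw [hcol j, one_mul]
    _ = ∑ k, ∑ j, w k j * Real.negMulLog (lam j) := by
        rw [Finset.sum_comm]; simp [Finset.sum_mul]
    _ ≤ ∑ k, Real.negMulLog (∑ j, w k j * lam j) := by
        refine Finset.sum_le_sum fun k _ => ?_
        have := Real.concaveOn_negMulLog.le_map_sum
          (t := Finset.univ) (w := fun j => w k j) (p := lam)
          (fun j _ => hwnonneg k j) (hrow k) (fun j _ => hlamnn j)
        simpa [smul_eq_mul] using this
    _ = ∑ k, Real.negMulLog ((star U * σ * U) k k).re := by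
        refine Finset.sum_congr rfl fun k _ => ?_; rw [hdiagentry k]

/-- Monitoring inequality: `Φ_A(M_A^ε(ρ)) = Φ_A(ρ)` and
`S(Φ_A(ρ)) − S(M_A^ε(ρ)) ≤ (1−ε)(S(Φ_A(ρ)) − S(ρ))`, i.e.
`ℜ_A(M_A^ε(ρ)) − ℜ_A(ρ) ≥ ε 𝕴_A(ρ)`. -/
theorem monitoring_inequality {dA dB : ℕ} {ι : Type*} [Fintype ι] [DecidableEq ι]
    (A : ι → Matrix (Fin dA) (Fin dA) ℂ)
    (hproj : ∀ i j, A i * A j = if i = j then A i else 0)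
    (hherm : ∀ i, (A i)ᴴ = A i)
    (hsum : ∑ i, A i = 1)
    (ρ : Matrix (Fin dA × Fin dB) (Fin dA × Fin dB) ℂ)
    (hρ : ρ.PosSemidef) (htr : ρ.trace = 1)
    (ε : ℝ) (hε : ε ∈ Set.Icc (0 : ℝ) 1)
    (hM : ((1 - ε) • ρ + ε • pinch A ρ).IsHermitian)
    (hΦ : (pinch A ρ).IsHermitian) :
    pinch A ((1 - ε) • ρ + ε • pinch A ρ) = pinch A ρ ∧
      vnEntropy hΦ - vnEntropy hM ≤ (1 - ε) * (vnEntropy hΦ - vnEntropy hρ.isHermitian) := by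
  obtain ⟨hε0, hε1⟩ := hε
  have hΦpsd : (pinch A ρ).PosSemidef := aux_pinch_posSemidef A hherm hρ
  constructor
  · rw [aux_pinch_smul_add, aux_pinch_idem A hproj, ← add_smul, sub_add_cancel, one_smul]
  · set M := (1 - ε) • ρ + ε • pinch A ρ with hMdef
    set U : Matrix (Fin dA × Fin dB) (Fin dA × Fin dB) ℂ :=
      (hM.eigenvectorUnitary : Matrix (Fin dA × Fin dB) (Fin dA × Fin dB) ℂ) with hUdef
    have hUmem : U ∈ Matrix.unitaryGroup (Fin dA × Fin dB) ℂ := hM.eigenvectorUnitary.2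
    have hdiag : star U * M * U = diagonal (Complex.ofReal ∘ hM.eigenvalues) := by
      have h := hM.conjStarAlgAut_star_eigenvectorUnitary
      rw [Unitary.conjStarAlgAut_apply, Unitary.coe_star, star_star] at h
      exact h
    set q : Fin dA × Fin dB → ℝ := fun k => ((star U * ρ * U) k k).re with hq
    set r : Fin dA × Fin dB → ℝ := fun k => ((star U * pinch A ρ * U) k k).re with hr
    have hqnn : ∀ k, 0 ≤ q k := by
      intro k
      apply aux_psd_diag_re_nonneg
      rw [Matrix.star_eq_conjTranspose]
      exact hρ.conjTranspose_mul_mul_same U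
    have hrnn : ∀ k, 0 ≤ r k := by
      intro k
      apply aux_psd_diag_re_nonneg
      rw [Matrix.star_eq_conjTranspose]
      exact hΦpsd.conjTranspose_mul_mul_same U
    have hev : ∀ k, hM.eigenvalues k = (1 - ε) * q k + ε * r k := by
      intro k
      have h1 : star U * M * U
          = (1 - ε) • (star U * ρ * U) + ε • (star U * pinch A ρ * U) := by
        rw [hMdef]
        simp only [Matrix.mul_add, Matrix.add_mul, Matrix.mul_smul, Matrix.smul_mul]
      have h2 := congrArg (fun X => (X k k).re) (hdiag.symm.trans h1)
      simpa [Matrix.diagonal_apply_eq, Function.comp, Complex.add_re, Complex.smul_re] using h2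
    have hρle : vnEntropy hρ.isHermitian ≤ ∑ k, Real.negMulLog (q k) := by
      have := aux_entropy_le_diag hρ U hUmem
      convert this using 2
    have hΦle : vnEntropy hΦ ≤ ∑ k, Real.negMulLog (r k) := by
      have := aux_entropy_le_diag hΦpsd U hUmem
      convert this using 2
    have hMent : (1 - ε) * (∑ k, Real.negMulLog (q k)) + ε * (∑ k, Real.negMulLog (r k))
        ≤ vnEntropy hM := by
      rw [vnEntropy, Finset.mul_sum, Finset.mul_sum, ← Finset.sum_add_distrib]
      refine Finset.sum_le_sum fun k _ => ?_
      rw [hev k]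
      have := Real.concaveOn_negMulLog.2 (Set.mem_Ici.mpr (hqnn k)) (Set.mem_Ici.mpr (hrnn k))
        (by linarith : (0:ℝ) ≤ 1 - ε) hε0 (by ring)
      simpa [smul_eq_mul] using this
    have h1ε : (0:ℝ) ≤ 1 - ε := by linarith
    nlinarith [mul_le_mul_of_nonneg_left hρle h1ε, mul_le_mul_of_nonneg_left hΦle hε0]
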